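/- Let p = m > 1, 1 ≤ m ≤ N, R > 0, β < -1, and let Ω = {(η,τ) ∈ ℝ^m × ℝ^{N-m} : |η| < R}. For every C¹ function u with compact support in Ω \ ({0} × ℝ^{N-m}), (|β+1|/p)^p ∫_Ω |u|^p |η|^{-p} (ln(R/|η|))^β dη dτ ≤ ∫_Ω |∇u|^p (ln(R/|η|))^{p+β} dη dτ. -/

import Mathlib

open Real MeasureTheory

-- derivative of |t|^m for m ≥ 2
lemma hasDerivAt_abs_pow {m : ℕ} (hm : 2 ≤ m) (t : ℝ) :
    HasDerivAt (fun t : ℝ => |t| ^ m) ((m : ℝ) * t * |t| ^ (m - 2)) t := by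
  rcases lt_trichotomy t 0 with ht | rfl | ht
  · have h : (fun t : ℝ => |t| ^ m) =ᶠ[nhds t] fun t => (-t) ^ m := by
      filter_upwards [eventually_lt_nhds ht] with s hs
      rw [abs_of_neg hs]
    have h' : HasDerivAt (fun t : ℝ => (-t) ^ m) ((m : ℝ) * t * |t| ^ (m - 2)) t := by
      have := (((hasDerivAt_id t).neg).pow m)
      refine this.congr_deriv ?_
      rw [Pi.neg_apply, id_eq, abs_of_neg ht, show m - 1 = (m-2)+1 by omega, pow_succ]
      ring
    exact h'.congr_of_eventuallyEq h
  · have h0 : (0:ℝ) = (m:ℝ) * 0 * |(0:ℝ)| ^ (m-2) := by ring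
    rw [← h0]
    rw [hasDerivAt_iff_tendsto_slope]
    have : ∀ s : ℝ, s ≠ 0 → |slope (fun t : ℝ => |t| ^ m) 0 s| ≤ |s| ^ (m - 1) := by
      intro s hs
      rw [slope_def_field]
      simp only [abs_zero, zero_pow (by omega : m ≠ 0), sub_zero]
      rw [abs_div, abs_pow, abs_abs]
      rw [div_le_iff₀ (by positivity)]
      rw [← pow_succ]
      rw [show m - 1 + 1 = m by omega]
    have hten : Filter.Tendsto (fun s : ℝ => |s| ^ (m-1)) (nhdsWithin 0 {0}ᶜ) (nhds 0) := by
      have : Filter.Tendsto (fun s : ℝ => |s| ^ (m-1)) (nhds 0) (nhds 0) := by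
        have := ((continuous_abs.pow (m-1)).tendsto (0:ℝ))
        convert this using 2
        · rfl
        · rw [Pi.pow_apply, abs_zero, zero_pow (by omega : m - 1 ≠ 0)]
      exact this.mono_left nhdsWithin_le_nhds
    apply squeeze_zero_norm' _ hten
    filter_upwards [self_mem_nhdsWithin] with s hs
    exact this s hs
  · have h : (fun t : ℝ => |t| ^ m) =ᶠ[nhds t] fun t => t ^ m := by
      filter_upwards [eventually_gt_nhds ht] with s hs
      rw [abs_of_pos hs]
    have h' : HasDerivAt (fun t : ℝ => t ^ m) ((m : ℝ) * t * |t| ^ (m - 2)) t := by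
      refine (hasDerivAt_pow m t).congr_deriv ?_
      rw [abs_of_pos ht, show m - 1 = (m-2)+1 by omega, pow_succ]
      ring
    exact h'.congr_of_eventuallyEq h

lemma psi_hasDerivAt (R β : ℝ) (m : ℕ) {t : ℝ} (ht : 0 < t) (htR : t < R) :
    HasDerivAt (fun t : ℝ => (β+1)⁻¹ * (Real.log R - Real.log t) ^ (β+1) * t ^ (-(m:ℝ)))
      ((β+1)⁻¹ * ((β+1) * (Real.log R - Real.log t) ^ β * (-t⁻¹)) * t ^ (-(m:ℝ))
        + (β+1)⁻¹ * (Real.log R - Real.log t) ^ (β+1) * ((-(m:ℝ)) * t ^ (-(m:ℝ)-1))) t := by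
  have hL : 0 < Real.log R - Real.log t := sub_pos.2 (Real.log_lt_log ht htR)
  have h1 : HasDerivAt (fun t : ℝ => Real.log R - Real.log t) (-t⁻¹) t :=
    (Real.hasDerivAt_log ht.ne').const_sub _
  have h2 : HasDerivAt (fun y : ℝ => y ^ (β+1))
      ((β+1) * (Real.log R - Real.log t) ^ β) (Real.log R - Real.log t) := by
    have := Real.hasDerivAt_rpow_const (p := β+1) (Or.inl hL.ne')
    simpa using this
  have h3 : HasDerivAt (fun t : ℝ => (β+1)⁻¹ * (Real.log R - Real.log t) ^ (β+1))
      ((β+1)⁻¹ * ((β+1) * (Real.log R - Real.log t) ^ β * (-t⁻¹))) t := by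
    have := (h2.comp t h1).const_mul ((β+1)⁻¹)
    simpa [mul_assoc] using this
  have h4 : HasDerivAt (fun t : ℝ => t ^ (-(m:ℝ))) ((-(m:ℝ)) * t ^ (-(m:ℝ)-1)) t :=
    Real.hasDerivAt_rpow_const (Or.inl ht.ne')
  exact h3.mul h4

lemma divergence_radial (R β : ℝ) (m : ℕ) (hβ : β < -1) {t : ℝ} (ht : 0 < t) (htR : t < R) :
    (m:ℝ) * ((β+1)⁻¹ * (Real.log R - Real.log t) ^ (β+1) * t ^ (-(m:ℝ)))
      + ((β+1)⁻¹ * ((β+1) * (Real.log R - Real.log t) ^ β * (-t⁻¹)) * t ^ (-(m:ℝ))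
        + (β+1)⁻¹ * (Real.log R - Real.log t) ^ (β+1) * ((-(m:ℝ)) * t ^ (-(m:ℝ)-1))) * t
      = -((Real.log R - Real.log t) ^ β * t ^ (-(m:ℝ))) := by
  have hb : β + 1 ≠ 0 := by linarith
  have h5 : t ^ (-(m:ℝ)-1) * t = t ^ (-(m:ℝ)) := by
    rw [← Real.rpow_add_one ht.ne' (-(m:ℝ)-1)]; norm_num
  have h6 : t⁻¹ * t = 1 := inv_mul_cancel₀ ht.ne'
  have key : (m:ℝ) * ((β+1)⁻¹ * (Real.log R - Real.log t) ^ (β+1) * t ^ (-(m:ℝ)))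
      + ((β+1)⁻¹ * ((β+1) * (Real.log R - Real.log t) ^ β * (-t⁻¹)) * t ^ (-(m:ℝ))
        + (β+1)⁻¹ * (Real.log R - Real.log t) ^ (β+1) * ((-(m:ℝ)) * t ^ (-(m:ℝ)-1))) * t
      = (m:ℝ) * ((β+1)⁻¹ * (Real.log R - Real.log t) ^ (β+1) * t ^ (-(m:ℝ)))
        - ((β+1)⁻¹*(β+1)) * ((Real.log R - Real.log t) ^ β * t ^ (-(m:ℝ))) * (t⁻¹*t)
        - (m:ℝ) * ((β+1)⁻¹ * (Real.log R - Real.log t) ^ (β+1) * (t ^ (-(m:ℝ)-1) * t)) := by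
    ring
  rw [key, h5, h6, inv_mul_cancel₀ hb]
  ring

noncomputable section
namespace Stmt8

variable {N m : ℕ}

def sfun (hmN : m ≤ N) (ξ : EuclideanSpace ℝ (Fin N)) : ℝ :=
  Real.sqrt (∑ i : Fin m, ξ (Fin.castLE hmN i) ^ 2)

def wfun (hmN : m ≤ N) (ξ : EuclideanSpace ℝ (Fin N)) : ℝ :=
  ∑ i : Fin m, ξ (Fin.castLE hmN i) ^ 2

lemma wfun_nonneg (hmN : m ≤ N) (ξ) : 0 ≤ wfun hmN ξ :=
  Finset.sum_nonneg fun _ _ => sq_nonneg _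

lemma sfun_eq (hmN : m ≤ N) (ξ) : sfun hmN ξ = Real.sqrt (wfun hmN ξ) := rfl

lemma sfun_nonneg (hmN : m ≤ N) (ξ) : 0 ≤ sfun hmN ξ := Real.sqrt_nonneg _

lemma sq_sfun (hmN : m ≤ N) (ξ) : sfun hmN ξ ^ 2 = wfun hmN ξ :=
  Real.sq_sqrt (wfun_nonneg hmN ξ)

lemma wfun_contDiff (hmN : m ≤ N) : ContDiff ℝ 1 (wfun hmN : EuclideanSpace ℝ (Fin N) → ℝ) := by
  apply ContDiff.sum (fun i _ => ?_)
  exact ((EuclideanSpace.proj (Fin.castLE hmN i)).contDiff (𝕜 := ℝ)).pow 2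

lemma wfun_continuous (hmN : m ≤ N) :
    Continuous (wfun hmN : EuclideanSpace ℝ (Fin N) → ℝ) := (wfun_contDiff hmN).continuous

lemma sfun_continuous (hmN : m ≤ N) :
    Continuous (sfun hmN : EuclideanSpace ℝ (Fin N) → ℝ) :=
  Real.continuous_sqrt.comp (wfun_continuous hmN)

lemma sfun_contDiffAt (hmN : m ≤ N) {ξ : EuclideanSpace ℝ (Fin N)} (h : sfun hmN ξ ≠ 0) :
    ContDiffAt ℝ 1 (sfun hmN) ξ := by
  have hw : wfun hmN ξ ≠ 0 := by
    intro h0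
    exact h (by simp [sfun_eq, h0])
  exact (Real.contDiffAt_sqrt hw).comp ξ ((wfun_contDiff hmN).contDiffAt)

def Dw (hmN : m ≤ N) (ξ : EuclideanSpace ℝ (Fin N)) : EuclideanSpace ℝ (Fin N) →L[ℝ] ℝ :=
  ∑ i : Fin m, (2 * ξ (Fin.castLE hmN i)) • EuclideanSpace.proj (Fin.castLE hmN i)

lemma wfun_hasFDerivAt (hmN : m ≤ N) (ξ : EuclideanSpace ℝ (Fin N)) :
    HasFDerivAt (wfun hmN) (Dw hmN ξ) ξ := by
  apply HasFDerivAt.fun_sum (fun i _ => ?_)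
  have hp := (EuclideanSpace.proj (𝕜 := ℝ) (Fin.castLE hmN i)).hasFDerivAt (x := ξ)
  have h := hp.mul hp
  have : (2 * ξ (Fin.castLE hmN i)) • EuclideanSpace.proj (𝕜 := ℝ) (Fin.castLE hmN i)
      = ξ (Fin.castLE hmN i) • EuclideanSpace.proj (Fin.castLE hmN i)
        + ξ (Fin.castLE hmN i) • EuclideanSpace.proj (Fin.castLE hmN i) := by
    rw [two_mul, add_smul]
  rw [this]
  exact h.congr_of_eventuallyEq (Filter.Eventually.of_forall fun y => sq _)

lemma sfun_hasFDerivAt (hmN : m ≤ N) {ξ : EuclideanSpace ℝ (Fin N)} (h : 0 < sfun hmN ξ) :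
    HasFDerivAt (sfun hmN) ((2 * sfun hmN ξ)⁻¹ • Dw hmN ξ) ξ := by
  have hw : wfun hmN ξ ≠ 0 := by
    intro h0
    rw [sfun_eq, h0] at h
    simp at h
  have hsq := (Real.hasDerivAt_sqrt hw).comp_hasFDerivAt ξ (wfun_hasFDerivAt hmN ξ)
  rw [one_div] at hsq
  exact hsq

-- single vector
def eN (hmN : m ≤ N) (i : Fin m) : EuclideanSpace ℝ (Fin N) :=
  EuclideanSpace.single (Fin.castLE hmN i) (1:ℝ)

lemma Dw_apply_eN (hmN : m ≤ N) (ξ : EuclideanSpace ℝ (Fin N)) (i : Fin m) :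
    Dw hmN ξ (eN hmN i) = 2 * ξ (Fin.castLE hmN i) := by
  rw [Dw]
  rw [ContinuousLinearMap.sum_apply]
  rw [Finset.sum_eq_single i]
  · simp [eN, EuclideanSpace.single_apply]
  · intro j _ hj
    have : Fin.castLE hmN j ≠ Fin.castLE hmN i := by
      simp [Fin.castLE_inj]
      exact hj
    simp [eN, EuclideanSpace.single_apply, this]
  · simp

lemma proj_apply_eN (hmN : m ≤ N) (i : Fin m) :
    EuclideanSpace.proj (𝕜 := ℝ) (Fin.castLE hmN i) (eN hmN i) = 1 := by
  simp [eN, EuclideanSpace.single_apply]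







def chi (a₁ a₂ b₂ b₃ : ℝ) (t : ℝ) : ℝ :=
  Real.smoothTransition ((t - a₁)/(a₂ - a₁)) * Real.smoothTransition ((b₃ - t)/(b₃ - b₂))

lemma chi_contDiff {a₁ a₂ b₂ b₃ : ℝ} : ContDiff ℝ 1 (chi a₁ a₂ b₂ b₃) := by
  apply ContDiff.mul
  · exact Real.smoothTransition.contDiff.comp ((contDiff_id.sub contDiff_const).div_const _)
  · exact Real.smoothTransition.contDiff.comp ((contDiff_const.sub contDiff_id).div_const _)

lemma chi_one {a₁ a₂ b₂ b₃ t : ℝ} (h1 : a₁ < a₂) (h2 : b₂ < b₃) (h : a₂ ≤ t) (h' : t ≤ b₂) :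
    chi a₁ a₂ b₂ b₃ t = 1 := by
  rw [chi, Real.smoothTransition.one_of_one_le, Real.smoothTransition.one_of_one_le, mul_one]
  · rw [le_div_iff₀ (by linarith)]; linarith
  · rw [le_div_iff₀ (by linarith)]; linarith

lemma chi_zero_lo {a₁ a₂ b₂ b₃ t : ℝ} (h1 : a₁ < a₂) (h : t ≤ a₁) : chi a₁ a₂ b₂ b₃ t = 0 := by
  rw [chi, Real.smoothTransition.zero_of_nonpos, zero_mul]
  apply div_nonpos_of_nonpos_of_nonneg <;> linarith

lemma chi_zero_hi {a₁ a₂ b₂ b₃ t : ℝ} (h2 : b₂ < b₃) (h : b₃ ≤ t) : chi a₁ a₂ b₂ b₃ t = 0 := by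
  rw [chi, Real.smoothTransition.zero_of_nonpos (x := (b₃ - t)/(b₃ - b₂)), mul_zero]
  apply div_nonpos_of_nonpos_of_nonneg <;> linarith

def qfun (R β a₁ a₂ b₂ b₃ : ℝ) (m : ℕ) (t : ℝ) : ℝ :=
  (β+1)⁻¹ * chi a₁ a₂ b₂ b₃ t * (Real.log R - Real.log t) ^ (β+1) * t ^ (-(m:ℝ))

lemma qfun_contDiffAt {R β a₁ a₂ b₂ b₃ : ℝ} {t : ℝ} (ht : 0 < t) (htR : t < R) :
    ContDiffAt ℝ 1 (qfun R β a₁ a₂ b₂ b₃ m) t := by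
  have hL : 0 < Real.log R - Real.log t := sub_pos.2 (Real.log_lt_log ht htR)
  apply ContDiffAt.mul
  apply ContDiffAt.mul
  apply ContDiffAt.mul
  · exact contDiffAt_const
  · exact chi_contDiff.contDiffAt
  · exact (Real.contDiffAt_rpow_const_of_ne hL.ne').comp t
      (contDiffAt_const.sub ((Real.contDiffAt_log.2 ht.ne')))
  · exact Real.contDiffAt_rpow_const_of_ne ht.ne'

lemma qfun_hasDerivAt {R β a₁ a₂ b₂ b₃ : ℝ} {t : ℝ} (h1 : a₁ < a₂) (h2 : b₂ < b₃)
    (ht : 0 < t) (htR : t < R) (ha : a₂ < t) (hb : t < b₂)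
    (h1' : ∀ u, a₂ < u → u < b₂ → chi a₁ a₂ b₂ b₃ u = 1) :
    HasDerivAt (qfun R β a₁ a₂ b₂ b₃ m)
      ((β+1)⁻¹ * ((β+1) * (Real.log R - Real.log t) ^ β * (-t⁻¹)) * t ^ (-(m:ℝ))
        + (β+1)⁻¹ * (Real.log R - Real.log t) ^ (β+1) * ((-(m:ℝ)) * t ^ (-(m:ℝ)-1))) t := by
  have heq : qfun R β a₁ a₂ b₂ b₃ m =ᶠ[nhds t]
      fun t : ℝ => (β+1)⁻¹ * (Real.log R - Real.log t) ^ (β+1) * t ^ (-(m:ℝ)) := by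
    filter_upwards [eventually_gt_nhds ha, eventually_lt_nhds hb] with u hu1 hu2
    rw [qfun, h1' u hu1 hu2, mul_one]
  exact (psi_hasDerivAt R β m ht htR).congr_of_eventuallyEq heq

def q'fun (R β : ℝ) (m : ℕ) (t : ℝ) : ℝ :=
  (β+1)⁻¹ * ((β+1) * (Real.log R - Real.log t) ^ β * (-t⁻¹)) * t ^ (-(m:ℝ))
    + (β+1)⁻¹ * (Real.log R - Real.log t) ^ (β+1) * ((-(m:ℝ)) * t ^ (-(m:ℝ)-1))

def Ffun (hmN : m ≤ N) (R β a₁ a₂ b₂ b₃ : ℝ) (i : Fin m)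
    (ξ : EuclideanSpace ℝ (Fin N)) : ℝ :=
  qfun R β a₁ a₂ b₂ b₃ m (sfun hmN ξ) * ξ (Fin.castLE hmN i)

lemma Ffun_contDiff (hmN : m ≤ N) {R β a₁ a₂ b₂ b₃ : ℝ} (h0 : 0 < a₁) (h1 : a₁ < a₂)
    (h2 : b₂ < b₃) (h3 : b₃ < R) (i : Fin m) :
    ContDiff ℝ 1 (Ffun hmN R β a₁ a₂ b₂ b₃ i) := by
  rw [contDiff_iff_contDiffAt]
  intro ξ
  by_cases hR : R ≤ sfun hmN ξ
  · have hev : Ffun hmN R β a₁ a₂ b₂ b₃ i =ᶠ[nhds ξ] fun _ => 0 := by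
      have : ∀ᶠ y in nhds ξ, b₃ < sfun hmN y :=
        ((sfun_continuous hmN).continuousAt).eventually (eventually_gt_nhds (lt_of_lt_of_le h3 hR))
      filter_upwards [this] with y hy
      rw [Ffun, qfun, chi_zero_hi h2 hy.le]
      ring
    exact (contDiffAt_const (c := (0:ℝ))).congr_of_eventuallyEq hev
  · push_neg at hR
    rcases eq_or_lt_of_le (sfun_nonneg hmN ξ) with hz | hpos
    · have hev : Ffun hmN R β a₁ a₂ b₂ b₃ i =ᶠ[nhds ξ] fun _ => 0 := by
        have : ∀ᶠ y in nhds ξ, sfun hmN y < a₁ :=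
          ((sfun_continuous hmN).continuousAt).eventually (eventually_lt_nhds (by rw [← hz]; exact h0))
        filter_upwards [this] with y hy
        rw [Ffun, qfun, chi_zero_lo h1 hy.le]
        ring
      exact (contDiffAt_const (c := (0:ℝ))).congr_of_eventuallyEq hev
    · apply ContDiffAt.mul
      · exact (qfun_contDiffAt hpos hR).comp ξ (sfun_contDiffAt hmN hpos.ne')
      · exact ((EuclideanSpace.proj (𝕜 := ℝ) (Fin.castLE hmN i)).contDiff).contDiffAt

lemma Ffun_hasFDerivAt (hmN : m ≤ N) {R β a₁ a₂ b₂ b₃ : ℝ} (h0 : 0 < a₂) (h1 : a₁ < a₂)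
    (h2 : b₂ < b₃) (h3 : b₂ < R) (i : Fin m) {ξ : EuclideanSpace ℝ (Fin N)}
    (hs1 : a₂ < sfun hmN ξ) (hs2 : sfun hmN ξ < b₂) :
    HasFDerivAt (Ffun hmN R β a₁ a₂ b₂ b₃ i)
      (qfun R β a₁ a₂ b₂ b₃ m (sfun hmN ξ) • EuclideanSpace.proj (Fin.castLE hmN i)
        + ξ (Fin.castLE hmN i) •
          (q'fun R β m (sfun hmN ξ) • ((2 * sfun hmN ξ)⁻¹ • Dw hmN ξ))) ξ := by
  have hpos : 0 < sfun hmN ξ := lt_trans h0 hs1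
  have hq := qfun_hasDerivAt (R := R) (β := β) (m := m) h1 h2 hpos (lt_trans hs2 h3) hs1 hs2
    (fun u hu1 hu2 => chi_one h1 h2 hu1.le hu2.le)
  have hqs := hq.comp_hasFDerivAt ξ (sfun_hasFDerivAt hmN hpos)
  have hp := (EuclideanSpace.proj (𝕜 := ℝ) (Fin.castLE hmN i)).hasFDerivAt (x := ξ)
  exact hqs.mul hp

lemma Ffun_fderiv_apply (hmN : m ≤ N) {R β a₁ a₂ b₂ b₃ : ℝ} (h0 : 0 < a₂) (h1 : a₁ < a₂)
    (h2 : b₂ < b₃) (h3 : b₂ < R) (i : Fin m) {ξ : EuclideanSpace ℝ (Fin N)}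
    (hs1 : a₂ < sfun hmN ξ) (hs2 : sfun hmN ξ < b₂) :
    fderiv ℝ (Ffun hmN R β a₁ a₂ b₂ b₃ i) ξ (eN hmN i)
      = qfun R β a₁ a₂ b₂ b₃ m (sfun hmN ξ)
        + q'fun R β m (sfun hmN ξ) * (sfun hmN ξ)⁻¹ * ξ (Fin.castLE hmN i) ^ 2 := by
  have hpos : 0 < sfun hmN ξ := lt_trans h0 hs1
  rw [(Ffun_hasFDerivAt hmN h0 h1 h2 h3 i hs1 hs2).fderiv]
  have hne : sfun hmN ξ ≠ 0 := hpos.ne'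
  simp only [ContinuousLinearMap.add_apply, ContinuousLinearMap.coe_smul', Pi.smul_apply,
    proj_apply_eN, Dw_apply_eN, smul_eq_mul, mul_one]
  field_simp

lemma Ffun_div_sum (hmN : m ≤ N) {R β a₁ a₂ b₂ b₃ : ℝ} (hβ : β < -1) (h0 : 0 < a₂)
    (h1 : a₁ < a₂) (h2 : b₂ < b₃) (h3 : b₂ < R) {ξ : EuclideanSpace ℝ (Fin N)}
    (hs1 : a₂ < sfun hmN ξ) (hs2 : sfun hmN ξ < b₂) :
    ∑ i : Fin m, fderiv ℝ (Ffun hmN R β a₁ a₂ b₂ b₃ i) ξ (eN hmN i)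
      = -((Real.log R - Real.log (sfun hmN ξ)) ^ β * (sfun hmN ξ) ^ (-(m:ℝ))) := by
  have hpos : 0 < sfun hmN ξ := lt_trans h0 hs1
  have hsum : ∑ i : Fin m, fderiv ℝ (Ffun hmN R β a₁ a₂ b₂ b₃ i) ξ (eN hmN i)
      = (m:ℝ) * qfun R β a₁ a₂ b₂ b₃ m (sfun hmN ξ)
        + q'fun R β m (sfun hmN ξ) * (sfun hmN ξ)⁻¹ * wfun hmN ξ := by
    rw [Finset.sum_congr rfl (fun i _ => Ffun_fderiv_apply hmN h0 h1 h2 h3 i hs1 hs2)]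
    rw [Finset.sum_add_distrib, Finset.sum_const, ← Finset.mul_sum]
    simp [wfun, mul_comm]
  rw [hsum]
  have hw : wfun hmN ξ = sfun hmN ξ ^ 2 := (sq_sfun hmN ξ).symm
  rw [hw]
  have hchi : qfun R β a₁ a₂ b₂ b₃ m (sfun hmN ξ)
      = (β+1)⁻¹ * (Real.log R - Real.log (sfun hmN ξ)) ^ (β+1) * (sfun hmN ξ) ^ (-(m:ℝ)) := by
    rw [qfun, chi_one h1 h2 hs1.le hs2.le]
    ring
  have hinv : q'fun R β m (sfun hmN ξ) * (sfun hmN ξ)⁻¹ * sfun hmN ξ ^ 2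
      = q'fun R β m (sfun hmN ξ) * sfun hmN ξ := by
    field_simp
  rw [hchi, hinv]
  exact divergence_radial R β m hβ hpos (lt_trans hs2 h3)

lemma abs_pow_contDiff {m : ℕ} (hm : 2 ≤ m) : ContDiff ℝ 1 (fun t : ℝ => |t| ^ m) := by
  rw [contDiff_one_iff_deriv]
  constructor
  · exact fun t => (hasDerivAt_abs_pow hm t).differentiableAt
  · have : deriv (fun t : ℝ => |t| ^ m) = fun t => (m:ℝ) * t * |t| ^ (m-2) :=
      funext fun t => (hasDerivAt_abs_pow hm t).deriv
    rw [this]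
    exact (continuous_const.mul continuous_id).mul (continuous_abs.pow _)

lemma fderiv_eq_inner_gradient (u : EuclideanSpace ℝ (Fin N) → ℝ) (ξ v : EuclideanSpace ℝ (Fin N)) :
    fderiv ℝ u ξ v = inner (𝕜 := ℝ) (gradient u ξ) v := by
  rw [gradient, ← InnerProductSpace.toDual_apply_apply, LinearIsometryEquiv.apply_symm_apply]

lemma norm_gradient_eq (u : EuclideanSpace ℝ (Fin N) → ℝ) (ξ : EuclideanSpace ℝ (Fin N)) :
    ‖gradient u ξ‖ = ‖fderiv ℝ u ξ‖ := by
  rw [gradient]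
  exact LinearIsometryEquiv.norm_map _ _

lemma fderiv_apply_eN (hmN : m ≤ N) (u : EuclideanSpace ℝ (Fin N) → ℝ)
    (ξ : EuclideanSpace ℝ (Fin N)) (i : Fin m) :
    fderiv ℝ u ξ (eN hmN i) = gradient u ξ (Fin.castLE hmN i) := by
  rw [fderiv_eq_inner_gradient, eN, EuclideanSpace.inner_single_right]
  simp

lemma sum_sq_coord_le (hmN : m ≤ N) (g : EuclideanSpace ℝ (Fin N)) :
    ∑ i : Fin m, g (Fin.castLE hmN i) ^ 2 ≤ ‖g‖ ^ 2 := by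
  have hnorm : ‖g‖ ^ 2 = ∑ j : Fin N, g j ^ 2 := by
    rw [EuclideanSpace.norm_eq, Real.sq_sqrt (by positivity)]
    simp [Real.norm_eq_abs, sq_abs]
  rw [hnorm]
  have himg : ∑ i : Fin m, g (Fin.castLE hmN i) ^ 2
      = ∑ j ∈ Finset.univ.image (fun i : Fin m => Fin.castLE hmN i), g j ^ 2 :=
    (Finset.sum_image (s := Finset.univ) (f := fun j : Fin N => g j ^ 2)
      (g := fun i : Fin m => Fin.castLE hmN i)
      (fun a _ b _ h => by rwa [Fin.castLE_inj] at h)).symm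
  rw [himg]
  exact Finset.sum_le_sum_of_subset_of_nonneg (Finset.subset_univ _) fun j _ _ => sq_nonneg _

lemma abs_sum_coord_mul_le (hmN : m ≤ N) (g ξ : EuclideanSpace ℝ (Fin N)) :
    |∑ i : Fin m, g (Fin.castLE hmN i) * ξ (Fin.castLE hmN i)| ≤ ‖g‖ * sfun hmN ξ := by
  have h1 := Finset.sum_mul_sq_le_sq_mul_sq Finset.univ
    (fun i : Fin m => g (Fin.castLE hmN i)) (fun i : Fin m => ξ (Fin.castLE hmN i))
  have h2 := sum_sq_coord_le hmN g
  have h3 : ∑ i : Fin m, ξ (Fin.castLE hmN i) ^ 2 = sfun hmN ξ ^ 2 := (sq_sfun hmN ξ).symm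
  have hsq : (∑ i : Fin m, g (Fin.castLE hmN i) * ξ (Fin.castLE hmN i)) ^ 2
      ≤ (‖g‖ * sfun hmN ξ) ^ 2 := by
    rw [mul_pow]
    calc (∑ i : Fin m, g (Fin.castLE hmN i) * ξ (Fin.castLE hmN i)) ^ 2
        ≤ (∑ i : Fin m, g (Fin.castLE hmN i) ^ 2) * (∑ i : Fin m, ξ (Fin.castLE hmN i) ^ 2) := h1
      _ ≤ ‖g‖ ^ 2 * sfun hmN ξ ^ 2 := by
          rw [h3]
          exact mul_le_mul_of_nonneg_right h2 (sq_nonneg _)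
  calc |∑ i : Fin m, g (Fin.castLE hmN i) * ξ (Fin.castLE hmN i)|
      = Real.sqrt ((∑ i : Fin m, g (Fin.castLE hmN i) * ξ (Fin.castLE hmN i)) ^ 2) :=
        (Real.sqrt_sq_eq_abs _).symm
    _ ≤ Real.sqrt ((‖g‖ * sfun hmN ξ) ^ 2) := Real.sqrt_le_sqrt hsq
    _ = ‖g‖ * sfun hmN ξ := by
        rw [Real.sqrt_sq_eq_abs, abs_of_nonneg (mul_nonneg (norm_nonneg g) (sfun_nonneg hmN ξ))]

lemma continuous_of_zero_off {X : Type*} [TopologicalSpace X] {f : X → ℝ} {K V : Set X}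
    (hKc : IsClosed K) (hV : IsOpen V) (hKV : K ⊆ V) (hf0 : ∀ x ∉ K, f x = 0)
    (hfc : ∀ x ∈ V, ContinuousAt f x) : Continuous f := by
  rw [continuous_iff_continuousAt]
  intro x
  by_cases hx : x ∈ V
  · exact hfc x hx
  · have hxK : x ∉ K := fun h => hx (hKV h)
    have hev : f =ᶠ[nhds x] fun _ => 0 := by
      filter_upwards [hKc.isOpen_compl.mem_nhds hxK] with y hy using hf0 y hy
    exact hev.continuousAt

lemma gradient_continuous {N : ℕ} {u : EuclideanSpace ℝ (Fin N) → ℝ} (hu : ContDiff ℝ 1 u) :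
    Continuous fun ξ => gradient u ξ :=
  (InnerProductSpace.toDual ℝ _).symm.continuous.comp (hu.continuous_fderiv one_ne_zero)

lemma gradient_zero_off {N : ℕ} {u : EuclideanSpace ℝ (Fin N) → ℝ}
    {ξ : EuclideanSpace ℝ (Fin N)} (hξ : ξ ∉ tsupport u) : gradient u ξ = 0 := by
  have hev : u =ᶠ[nhds ξ] fun _ => 0 := by
    filter_upwards [(isClosed_tsupport u).isOpen_compl.mem_nhds hξ] with y hy using
      image_eq_zero_of_notMem_tsupport hy
  rw [gradient, hev.fderiv_eq]
  simp

end Stmt8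
open Stmt8 in
set_option maxHeartbeats 1000000 in
theorem stmt8 (N m : ℕ) (hm : 1 < m) (hmN : m ≤ N) (R β : ℝ) (hR : 0 < R) (hβ : β < -1)
    (u : EuclideanSpace ℝ (Fin N) → ℝ) (hu : ContDiff ℝ 1 u) (hcs : HasCompactSupport u)
    (hsupp : ∀ ξ ∈ tsupport u,
      (∃ i : Fin m, ξ (Fin.castLE hmN i) ≠ 0) ∧
        Real.sqrt (∑ i : Fin m, ξ (Fin.castLE hmN i) ^ 2) < R) :
    (|β + 1| / (m : ℝ)) ^ (m : ℝ) *
        ∫ ξ in {ξ : EuclideanSpace ℝ (Fin N) |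
            Real.sqrt (∑ i : Fin m, ξ (Fin.castLE hmN i) ^ 2) < R},
          |u ξ| ^ (m : ℝ) * Real.sqrt (∑ i : Fin m, ξ (Fin.castLE hmN i) ^ 2) ^ (-(m : ℝ)) *
            Real.log (R / Real.sqrt (∑ i : Fin m, ξ (Fin.castLE hmN i) ^ 2)) ^ β ≤
      ∫ ξ in {ξ : EuclideanSpace ℝ (Fin N) |
            Real.sqrt (∑ i : Fin m, ξ (Fin.castLE hmN i) ^ 2) < R},
        ‖gradient u ξ‖ ^ (m : ℝ) *
          Real.log (R / Real.sqrt (∑ i : Fin m, ξ (Fin.castLE hmN i) ^ 2)) ^ ((m : ℝ) + β) := by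
  classical
  have hm2 : 2 ≤ m := hm
  have hm0 : (m:ℝ) ≠ 0 := Nat.cast_ne_zero.2 (by omega)
  have hmpos : (0:ℝ) < m := by exact_mod_cast (by omega : 0 < m)
  have hm1 : (1:ℝ) < m := by exact_mod_cast hm
  have hb1 : β + 1 ≠ 0 := by intro h; nlinarith
  have habs : 0 < |β + 1| := abs_pos.2 hb1
  have hsdef : ∀ ξ : EuclideanSpace ℝ (Fin N),
      Real.sqrt (∑ i : Fin m, ξ (Fin.castLE hmN i) ^ 2) = sfun hmN ξ := fun _ => rfl
  simp only [hsdef]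
  by_cases hKe : tsupport u = ∅
  · have h1 : ∀ ξ : EuclideanSpace ℝ (Fin N),
        |u ξ| ^ (m:ℝ) * sfun hmN ξ ^ (-(m:ℝ)) * Real.log (R / sfun hmN ξ) ^ β = 0 := by
      intro ξ
      rw [image_eq_zero_of_notMem_tsupport (f := u) (x := ξ) (by simp [hKe])]
      simp [Real.zero_rpow hm0]
    have h2 : ∀ ξ : EuclideanSpace ℝ (Fin N),
        ‖gradient u ξ‖ ^ (m:ℝ) * Real.log (R / sfun hmN ξ) ^ ((m:ℝ)+β) = 0 := by
      intro ξ
      rw [gradient_zero_off (by simp [hKe])]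
      simp [Real.zero_rpow hm0]
    simp only [h1, h2, integral_zero, mul_zero]
    exact le_refl 0
  -- main case
  have hKne : (tsupport u).Nonempty := Set.nonempty_iff_ne_empty.2 hKe
  have hK_cpt : IsCompact (tsupport u) := hcs
  have hscont : Continuous (sfun hmN : EuclideanSpace ℝ (Fin N) → ℝ) := sfun_continuous hmN
  obtain ⟨ξa, hξaK, hmina⟩ := hK_cpt.exists_isMinOn hKne hscont.continuousOn
  obtain ⟨ξb, hξbK, hmaxb⟩ := hK_cpt.exists_isMaxOn hKne hscont.continuousOn
  set a := sfun hmN ξa with ha_def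
  set b := sfun hmN ξb with hb_def
  have hmin : ∀ ξ ∈ tsupport u, a ≤ sfun hmN ξ := fun ξ hξ => isMinOn_iff.1 hmina ξ hξ
  have hmax : ∀ ξ ∈ tsupport u, sfun hmN ξ ≤ b := fun ξ hξ => isMaxOn_iff.1 hmaxb ξ hξ
  have ha_pos : 0 < a := by
    obtain ⟨i, hi⟩ := (hsupp ξa hξaK).1
    have hw : 0 < wfun hmN ξa :=
      Finset.sum_pos' (fun j _ => sq_nonneg _) ⟨i, Finset.mem_univ i, by positivity⟩
    exact Real.sqrt_pos.2 hw
  have hb_lt : b < R := (hsupp ξb hξbK).2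
  have hab : a ≤ b := hmin ξb hξbK
  set a₁ := a/2 with ha₁
  set a₂ := 3*a/4 with ha₂
  set b₂ := (2*b+R)/3 with hb₂
  set b₃ := (b+2*R)/3 with hb₃
  have h01 : 0 < a₁ := by simp only [ha₁]; linarith
  have h12 : a₁ < a₂ := by simp only [ha₁, ha₂]; linarith
  have h2a : a₂ < a := by simp only [ha₂]; linarith
  have h2pos : 0 < a₂ := by simp only [ha₂]; linarith
  have hbb2 : b < b₂ := by simp only [hb₂]; linarith
  have h23 : b₂ < b₃ := by simp only [hb₂, hb₃]; linarith
  have h3R : b₃ < R := by simp only [hb₃]; linarith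
  have hb2R : b₂ < R := by simp only [hb₂]; linarith
  -- φ and F
  set φ : EuclideanSpace ℝ (Fin N) → ℝ := fun ξ => |u ξ| ^ m with hφ_def
  set F : Fin m → EuclideanSpace ℝ (Fin N) → ℝ :=
    fun i => Ffun hmN R β a₁ a₂ b₂ b₃ i with hF_def
  have hφc : ContDiff ℝ 1 φ := (abs_pow_contDiff hm2).comp hu
  have hφcs : HasCompactSupport φ :=
    hcs.comp_left (g := fun t : ℝ => |t| ^ m) (by simp [zero_pow (by omega : m ≠ 0)])
  have hφK : ∀ ξ, ξ ∉ tsupport u → φ ξ = 0 := by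
    intro ξ hξ
    rw [hφ_def]
    simp [image_eq_zero_of_notMem_tsupport hξ, zero_pow (by omega : m ≠ 0)]
  have hφ' : ∀ ξ, HasFDerivAt φ
      (((m:ℝ) * u ξ * |u ξ| ^ (m - 2)) • fderiv ℝ u ξ) ξ := fun ξ =>
    (hasDerivAt_abs_pow hm2 (u ξ)).comp_hasFDerivAt ξ (hu.differentiable one_ne_zero ξ).hasFDerivAt
  have hφderiv : ∀ ξ (i : Fin m), fderiv ℝ φ ξ (eN hmN i)
      = ((m:ℝ) * u ξ * |u ξ| ^ (m - 2)) * gradient u ξ (Fin.castLE hmN i) := by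
    intro ξ i
    rw [(hφ' ξ).fderiv, ContinuousLinearMap.smul_apply, smul_eq_mul, fderiv_apply_eN]
  have hφderiv0 : ∀ ξ, ξ ∉ tsupport u → fderiv ℝ φ ξ = 0 := by
    intro ξ hξ
    rw [(hφ' ξ).fderiv, image_eq_zero_of_notMem_tsupport hξ]
    simp
  have hFc : ∀ i, ContDiff ℝ 1 (F i) := fun i => Ffun_contDiff hmN h01 h12 h23 h3R i
  -- integrability package
  have hK_s_pos : ∀ ξ ∈ tsupport u, 0 < sfun hmN ξ := fun ξ hξ => lt_of_lt_of_le ha_pos (hmin ξ hξ)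
  have hK_s_ltR : ∀ ξ ∈ tsupport u, sfun hmN ξ < R := fun ξ hξ => lt_of_le_of_lt (hmax ξ hξ) hb_lt
  have int1 : ∀ i : Fin m, Integrable (fun ξ => φ ξ * fderiv ℝ (F i) ξ (eN hmN i)) := by
    intro i
    apply Continuous.integrable_of_hasCompactSupport
    · exact (hφc.continuous).mul
        (((hFc i).continuous_fderiv one_ne_zero).clm_apply continuous_const)
    · apply HasCompactSupport.intro hK_cpt
      intro ξ hξ
      rw [hφK ξ hξ, zero_mul]
  have int2 : ∀ i : Fin m, Integrable (fun ξ => fderiv ℝ φ ξ (eN hmN i) * F i ξ) := by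
    intro i
    apply Continuous.integrable_of_hasCompactSupport
    · exact ((hφc.continuous_fderiv one_ne_zero).clm_apply continuous_const).mul (hFc i).continuous
    · apply HasCompactSupport.intro hK_cpt
      intro ξ hξ
      rw [hφderiv0 ξ hξ]
      simp
  have int3 : ∀ i : Fin m, Integrable (fun ξ => φ ξ * F i ξ) := by
    intro i
    apply Continuous.integrable_of_hasCompactSupport
    · exact (hφc.continuous).mul (hFc i).continuous
    · apply HasCompactSupport.intro hK_cpt
      intro ξ hξ
      rw [hφK ξ hξ, zero_mul]
  have hibp : ∀ i : Fin m, ∫ ξ, φ ξ * fderiv ℝ (F i) ξ (eN hmN i)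
      = - ∫ ξ, fderiv ℝ φ ξ (eN hmN i) * F i ξ := fun i =>
    integral_mul_fderiv_eq_neg_fderiv_mul_of_integrable (int2 i) (int1 i) (int3 i)
      (fun x _ => (hφc.differentiable one_ne_zero) x) (fun x _ => ((hFc i).differentiable one_ne_zero) x)
  -- A integrand
  set Aint : EuclideanSpace ℝ (Fin N) → ℝ :=
    fun ξ => φ ξ * sfun hmN ξ ^ (-(m:ℝ)) * Real.log (R / sfun hmN ξ) ^ β with hAint_def
  have hAeq : ∀ ξ, Aint ξ = -(φ ξ * ∑ i : Fin m, fderiv ℝ (F i) ξ (eN hmN i)) := by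
    intro ξ
    by_cases hξ : ξ ∈ tsupport u
    · have hs1 : a₂ < sfun hmN ξ := lt_of_lt_of_le h2a (hmin ξ hξ)
      have hs2 : sfun hmN ξ < b₂ := lt_of_le_of_lt (hmax ξ hξ) hbb2
      have hspos : 0 < sfun hmN ξ := hK_s_pos ξ hξ
      have hdiv := Ffun_div_sum hmN hβ h2pos h12 h23 hb2R hs1 hs2
      rw [hF_def, hAint_def]
      simp only
      rw [hdiv, Real.log_div hR.ne' hspos.ne']
      ring
    · have h0 : φ ξ = 0 := hφK ξ hξ
      simp [hAint_def, h0]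
  have hA1 : ∫ ξ, Aint ξ = ∫ ξ, ∑ i : Fin m, fderiv ℝ φ ξ (eN hmN i) * F i ξ := by
    have e1 : ∫ ξ, Aint ξ = - ∫ ξ, φ ξ * ∑ i : Fin m, fderiv ℝ (F i) ξ (eN hmN i) := by
      rw [← integral_neg]
      exact integral_congr_ae (Filter.Eventually.of_forall fun ξ => by rw [hAeq ξ]; )
    have e2 : (fun ξ => φ ξ * ∑ i : Fin m, fderiv ℝ (F i) ξ (eN hmN i))
        = fun ξ => ∑ i : Fin m, φ ξ * fderiv ℝ (F i) ξ (eN hmN i) := by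
      funext ξ
      rw [Finset.mul_sum]
    rw [e1, e2, integral_finset_sum _ (fun i _ => int1 i)]
    rw [← Finset.sum_neg_distrib]
    rw [integral_finset_sum _ (fun i _ => int2 i)]
    exact Finset.sum_congr rfl fun i _ => by rw [hibp i, neg_neg]
  
  -- the pointwise bound function
  set Φ : EuclideanSpace ℝ (Fin N) → ℝ := fun ξ =>
    ((m:ℝ) * |β+1|⁻¹) * (|u ξ| ^ (m-1) * ‖gradient u ξ‖ *
      (Real.log (R / sfun hmN ξ) ^ (β+1) * sfun hmN ξ ^ (1-(m:ℝ)))) with hΦ_def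
  have hLpos : ∀ ξ ∈ tsupport u, 0 < Real.log (R / sfun hmN ξ) := by
    intro ξ hξ
    apply Real.log_pos
    rw [one_lt_div (hK_s_pos ξ hξ)]
    exact hK_s_ltR ξ hξ
  have hbound : ∀ ξ, (∑ i : Fin m, fderiv ℝ φ ξ (eN hmN i) * F i ξ) ≤ Φ ξ := by
    intro ξ
    by_cases hξ : ξ ∈ tsupport u
    · have hs1 : a₂ < sfun hmN ξ := lt_of_lt_of_le h2a (hmin ξ hξ)
      have hs2 : sfun hmN ξ < b₂ := lt_of_le_of_lt (hmax ξ hξ) hbb2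
      have hspos : 0 < sfun hmN ξ := hK_s_pos ξ hξ
      have hL : 0 < Real.log (R / sfun hmN ξ) := hLpos ξ hξ
      have hqval : qfun R β a₁ a₂ b₂ b₃ m (sfun hmN ξ)
          = (β+1)⁻¹ * Real.log (R / sfun hmN ξ) ^ (β+1) * sfun hmN ξ ^ (-(m:ℝ)) := by
        rw [qfun, chi_one h12 h23 hs1.le hs2.le, Real.log_div hR.ne' hspos.ne']
        ring
      have hsum_eq : (∑ i : Fin m, fderiv ℝ φ ξ (eN hmN i) * F i ξ)
          = ((m:ℝ) * u ξ * |u ξ| ^ (m-2)) * qfun R β a₁ a₂ b₂ b₃ m (sfun hmN ξ)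
            * (∑ i : Fin m, gradient u ξ (Fin.castLE hmN i) * ξ (Fin.castLE hmN i)) := by
        rw [Finset.mul_sum]
        apply Finset.sum_congr rfl
        intro i _
        rw [hφderiv ξ i, hF_def]
        simp only [Ffun]
        ring
      rw [hsum_eq]
      have habs1 : |(m:ℝ) * u ξ * |u ξ| ^ (m-2)| = (m:ℝ) * |u ξ| ^ (m-1) := by
        rw [abs_mul, abs_mul, Nat.abs_cast, abs_pow, abs_abs]
        rw [show m - 1 = m - 2 + 1 by omega, pow_succ]
        ring
      have habs2 : |qfun R β a₁ a₂ b₂ b₃ m (sfun hmN ξ)|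
          = |β+1|⁻¹ * Real.log (R / sfun hmN ξ) ^ (β+1) * sfun hmN ξ ^ (-(m:ℝ)) := by
        rw [hqval, abs_mul, abs_mul, abs_inv,
          abs_of_nonneg (Real.rpow_nonneg hL.le _),
          abs_of_nonneg (Real.rpow_nonneg hspos.le _)]
      have hcs1 := abs_sum_coord_mul_le hmN (gradient u ξ) ξ
      have hss : sfun hmN ξ ^ (-(m:ℝ)) * sfun hmN ξ = sfun hmN ξ ^ (1-(m:ℝ)) := by
        rw [show (1-(m:ℝ)) = (-(m:ℝ)) + 1 by ring, Real.rpow_add_one hspos.ne']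
      calc ((m:ℝ) * u ξ * |u ξ| ^ (m-2)) * qfun R β a₁ a₂ b₂ b₃ m (sfun hmN ξ)
            * (∑ i : Fin m, gradient u ξ (Fin.castLE hmN i) * ξ (Fin.castLE hmN i))
          ≤ |((m:ℝ) * u ξ * |u ξ| ^ (m-2)) * qfun R β a₁ a₂ b₂ b₃ m (sfun hmN ξ)
            * (∑ i : Fin m, gradient u ξ (Fin.castLE hmN i) * ξ (Fin.castLE hmN i))| :=
            le_abs_self _
        _ = ((m:ℝ) * |u ξ| ^ (m-1))
              * (|β+1|⁻¹ * Real.log (R / sfun hmN ξ) ^ (β+1) * sfun hmN ξ ^ (-(m:ℝ)))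
              * |∑ i : Fin m, gradient u ξ (Fin.castLE hmN i) * ξ (Fin.castLE hmN i)| := by
            rw [abs_mul, abs_mul, habs1, habs2]
        _ ≤ ((m:ℝ) * |u ξ| ^ (m-1))
              * (|β+1|⁻¹ * Real.log (R / sfun hmN ξ) ^ (β+1) * sfun hmN ξ ^ (-(m:ℝ)))
              * (‖gradient u ξ‖ * sfun hmN ξ) := by
            apply mul_le_mul_of_nonneg_left hcs1
            apply mul_nonneg
            · positivity
            · apply mul_nonneg (mul_nonneg (inv_nonneg.2 (abs_nonneg _))
                (Real.rpow_nonneg hL.le _)) (Real.rpow_nonneg hspos.le _)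
        _ = Φ ξ := by
            rw [hΦ_def]
            have expand : ((m:ℝ) * |u ξ| ^ (m-1))
                * (|β+1|⁻¹ * Real.log (R / sfun hmN ξ) ^ (β+1) * sfun hmN ξ ^ (-(m:ℝ)))
                * (‖gradient u ξ‖ * sfun hmN ξ)
                = ((m:ℝ) * |β+1|⁻¹) * (|u ξ| ^ (m-1) * ‖gradient u ξ‖ *
                  (Real.log (R / sfun hmN ξ) ^ (β+1) * (sfun hmN ξ ^ (-(m:ℝ)) * sfun hmN ξ))) := by
              ring
            rw [expand, hss]
    · have h0 : fderiv ℝ φ ξ = 0 := hφderiv0 ξ hξ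
      have hu0 : u ξ = 0 := image_eq_zero_of_notMem_tsupport hξ
      have hz : ∀ i : Fin m, fderiv ℝ φ ξ (eN hmN i) * F i ξ = 0 := fun i => by
        rw [h0]; simp
      rw [Finset.sum_congr rfl (fun i _ => hz i), Finset.sum_const, smul_zero]
      rw [hΦ_def]
      simp only [hu0, abs_zero, zero_pow (by omega : m - 1 ≠ 0), zero_mul, mul_zero, le_refl]
  
  set V : Set (EuclideanSpace ℝ (Fin N)) := {ξ | 0 < sfun hmN ξ ∧ sfun hmN ξ < R} with hV_def
  have hVopen : IsOpen V := (isOpen_lt continuous_const hscont).and (isOpen_lt hscont continuous_const)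
  have hKV : tsupport u ⊆ V := fun ξ hξ => ⟨hK_s_pos ξ hξ, hK_s_ltR ξ hξ⟩
  have hlogcont : ∀ ξ ∈ V, ContinuousAt (fun y => Real.log (R / sfun hmN y)) ξ := by
    intro ξ hξ
    have hdiv : ContinuousAt (fun y => R / sfun hmN y) ξ :=
      ContinuousAt.div continuousAt_const hscont.continuousAt hξ.1.ne'
    exact hdiv.log (div_ne_zero hR.ne' hξ.1.ne')
  have hlogne : ∀ ξ ∈ V, Real.log (R / sfun hmN ξ) ≠ 0 := by
    intro ξ hξ
    exact (Real.log_pos ((one_lt_div hξ.1).2 hξ.2)).ne'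
  have hΦint : Integrable Φ := by
    apply Continuous.integrable_of_hasCompactSupport
    · apply continuous_of_zero_off (isClosed_tsupport u) hVopen hKV
      · intro x hx
        rw [hΦ_def]
        simp only [image_eq_zero_of_notMem_tsupport hx, abs_zero,
          zero_pow (by omega : m - 1 ≠ 0), zero_mul, mul_zero]
      · intro x hx
        apply ContinuousAt.mul continuousAt_const
        apply ContinuousAt.mul
        · exact ((hu.continuous.abs.pow (m-1)).continuousAt).mul
            ((gradient_continuous hu).norm.continuousAt)
        · exact ((hlogcont x hx).rpow_const (Or.inl (hlogne x hx))).mul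
            (hscont.continuousAt.rpow_const (Or.inl hx.1.ne'))
    · apply HasCompactSupport.intro hK_cpt
      intro x hx
      rw [hΦ_def]
      simp only [image_eq_zero_of_notMem_tsupport hx, abs_zero,
        zero_pow (by omega : m - 1 ≠ 0), zero_mul, mul_zero]
  have hA2 : ∫ ξ, Aint ξ ≤ ∫ ξ, Φ ξ := by
    rw [hA1]
    exact integral_mono (integrable_finset_sum Finset.univ (fun i _ => int2 i)) hΦint hbound
  -- B integrand, G and H
  set Bint : EuclideanSpace ℝ (Fin N) → ℝ :=
    fun ξ => ‖gradient u ξ‖ ^ m * Real.log (R / sfun hmN ξ) ^ ((m:ℝ)+β) with hBint_def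
  have hAnn : ∀ ξ, 0 ≤ Aint ξ := by
    intro ξ
    by_cases hξ : ξ ∈ tsupport u
    · exact mul_nonneg (mul_nonneg (by positivity) (Real.rpow_nonneg (sfun_nonneg hmN ξ) _))
        (Real.rpow_nonneg (hLpos ξ hξ).le _)
    · simp [hAint_def, hφK ξ hξ]
  have hBnn : ∀ ξ, 0 ≤ Bint ξ := by
    intro ξ
    by_cases hξ : ξ ∈ tsupport u
    · exact mul_nonneg (by positivity) (Real.rpow_nonneg (hLpos ξ hξ).le _)
    · simp [hBint_def, gradient_zero_off hξ, zero_pow (by omega : m ≠ 0)]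
  set G : EuclideanSpace ℝ (Fin N) → ℝ := fun ξ => Aint ξ ^ (((m:ℝ)-1)/m) with hG_def
  set H : EuclideanSpace ℝ (Fin N) → ℝ := fun ξ => Bint ξ ^ ((m:ℝ))⁻¹ with hH_def
  have hm1ne : (m:ℝ) - 1 ≠ 0 := by linarith
  have hGnn : ∀ ξ, 0 ≤ G ξ := fun ξ => Real.rpow_nonneg (hAnn ξ) _
  have hHnn : ∀ ξ, 0 ≤ H ξ := fun ξ => Real.rpow_nonneg (hBnn ξ) _
  set p : ℝ := (m:ℝ)/((m:ℝ)-1) with hp_def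
  have hpq : Real.HolderConjugate p ((m:ℝ)) := by
    exact ((Real.holderConjugate_iff_eq_conjExponent hm1).2 hp_def).symm
  have hGpow : ∀ ξ, G ξ ^ p = Aint ξ := by
    intro ξ
    rw [hG_def]
    simp only
    rw [← Real.rpow_mul (hAnn ξ)]
    rw [show ((m:ℝ)-1)/m * p = 1 by rw [hp_def]; field_simp, Real.rpow_one]
  have hHpow : ∀ ξ, H ξ ^ (m:ℝ) = Bint ξ := by
    intro ξ
    rw [hH_def]
    simp only
    rw [← Real.rpow_mul (hBnn ξ), inv_mul_cancel₀ hm0, Real.rpow_one]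
  
  have hGH : ∀ ξ, Φ ξ = ((m:ℝ) * |β+1|⁻¹) * (G ξ * H ξ) := by
    intro ξ
    by_cases hξ : ξ ∈ tsupport u
    · have hspos : 0 < sfun hmN ξ := hK_s_pos ξ hξ
      have hL : 0 < Real.log (R / sfun hmN ξ) := hLpos ξ hξ
      have hsu : (0:ℝ) ≤ |u ξ| := abs_nonneg _
      have hGval : G ξ = |u ξ| ^ (m-1) * sfun hmN ξ ^ (1-(m:ℝ))
          * Real.log (R / sfun hmN ξ) ^ (β*(((m:ℝ)-1)/(m:ℝ))) := by
        simp only [hG_def, hAint_def, hφ_def]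
        rw [Real.mul_rpow (mul_nonneg (by positivity) (Real.rpow_nonneg (sfun_nonneg hmN ξ) _))
            (Real.rpow_nonneg hL.le _),
          Real.mul_rpow (by positivity) (Real.rpow_nonneg (sfun_nonneg hmN ξ) _)]
        congr 1
        · congr 1
          · rw [← Real.rpow_natCast |u ξ| m, ← Real.rpow_mul hsu]
            rw [show (m:ℝ) * (((m:ℝ)-1)/(m:ℝ)) = ((m-1:ℕ):ℝ) by
              rw [Nat.cast_sub (by omega : 1 ≤ m)]; push_cast; field_simp]
            rw [Real.rpow_natCast]
          · rw [← Real.rpow_mul (sfun_nonneg hmN ξ)]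
            congr 1
            field_simp
            ring
        · rw [← Real.rpow_mul hL.le]
      have hHval : H ξ = ‖gradient u ξ‖
          * Real.log (R / sfun hmN ξ) ^ (((m:ℝ)+β)*((m:ℝ))⁻¹) := by
        simp only [hH_def, hBint_def]
        rw [Real.mul_rpow (by positivity) (Real.rpow_nonneg hL.le _)]
        congr 1
        · rw [← Real.rpow_natCast ‖gradient u ξ‖ m, ← Real.rpow_mul (norm_nonneg _),
            mul_inv_cancel₀ hm0, Real.rpow_one]
        · rw [← Real.rpow_mul hL.le]
      have hLsum : Real.log (R / sfun hmN ξ) ^ (β*(((m:ℝ)-1)/(m:ℝ)))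
          * Real.log (R / sfun hmN ξ) ^ (((m:ℝ)+β)*((m:ℝ))⁻¹)
          = Real.log (R / sfun hmN ξ) ^ (β+1) := by
        rw [← Real.rpow_add hL]
        congr 1
        field_simp
        ring
      have final : ((m:ℝ) * |β+1|⁻¹) * (G ξ * H ξ) = Φ ξ := by
        calc ((m:ℝ) * |β+1|⁻¹) * (G ξ * H ξ)
            = ((m:ℝ) * |β+1|⁻¹) * (|u ξ| ^ (m-1) * ‖gradient u ξ‖ *
              ((Real.log (R / sfun hmN ξ) ^ (β*(((m:ℝ)-1)/(m:ℝ)))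
                * Real.log (R / sfun hmN ξ) ^ (((m:ℝ)+β)*((m:ℝ))⁻¹))
                * sfun hmN ξ ^ (1-(m:ℝ)))) := by
              rw [hGval, hHval]; ring
          _ = Φ ξ := by rw [hLsum, hΦ_def]
      exact final.symm
    · have hA0 : Aint ξ = 0 := by simp [hAint_def, hφK ξ hξ]
      have hG0 : G ξ = 0 := by
        simp only [hG_def]
        rw [hA0, Real.zero_rpow (div_ne_zero hm1ne hm0)]
      have hΦ0 : Φ ξ = 0 := by
        simp only [hΦ_def, image_eq_zero_of_notMem_tsupport hξ, abs_zero,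
          zero_pow (by omega : m - 1 ≠ 0), zero_mul, mul_zero]
      rw [hΦ0, hG0, zero_mul, mul_zero]
  -- continuity and MemLp
  have hAint_cont : Continuous Aint := by
    apply continuous_of_zero_off (isClosed_tsupport u) hVopen hKV
    · intro x hx
      simp [hAint_def, hφK x hx]
    · intro x hx
      apply ContinuousAt.mul
      apply ContinuousAt.mul
      · exact ((hu.continuous.abs.pow m).continuousAt)
      · exact hscont.continuousAt.rpow_const (Or.inl hx.1.ne')
      · exact (hlogcont x hx).rpow_const (Or.inl (hlogne x hx))
  have hBint_cont : Continuous Bint := by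
    apply continuous_of_zero_off (isClosed_tsupport u) hVopen hKV
    · intro x hx
      simp [hBint_def, gradient_zero_off hx, zero_pow (by omega : m ≠ 0)]
    · intro x hx
      apply ContinuousAt.mul
      · exact ((gradient_continuous hu).norm.pow m).continuousAt
      · exact (hlogcont x hx).rpow_const (Or.inl (hlogne x hx))
  have hexp_nonneg : (0:ℝ) ≤ ((m:ℝ)-1)/(m:ℝ) := div_nonneg (by linarith) (by linarith)
  have hGcont : Continuous G := by
    rw [hG_def]
    exact hAint_cont.rpow_const (fun x => Or.inr hexp_nonneg)
  have hHcont : Continuous H := by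
    rw [hH_def]
    exact hBint_cont.rpow_const (fun x => Or.inr (by positivity))
  have hGcs : HasCompactSupport G := by
    apply HasCompactSupport.intro hK_cpt
    intro x hx
    simp only [hG_def]
    rw [show Aint x = 0 by simp [hAint_def, hφK x hx], Real.zero_rpow (div_ne_zero hm1ne hm0)]
  have hHcs : HasCompactSupport H := by
    apply HasCompactSupport.intro hK_cpt
    intro x hx
    simp only [hH_def]
    rw [show Bint x = 0 by
        simp [hBint_def, gradient_zero_off hx, zero_pow (by omega : m ≠ 0)],
      Real.zero_rpow (inv_ne_zero hm0)]
  have hGmem : MemLp G (ENNReal.ofReal p) := hGcont.memLp_of_hasCompactSupport hGcs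
  have hHmem : MemLp H (ENNReal.ofReal ((m:ℝ))) := hHcont.memLp_of_hasCompactSupport hHcs
  have hHolder := integral_mul_le_Lp_mul_Lq_of_nonneg hpq
    (Filter.Eventually.of_forall hGnn) (Filter.Eventually.of_forall hHnn) hGmem hHmem
  have hGp : ∫ ξ, G ξ ^ p = ∫ ξ, Aint ξ :=
    integral_congr_ae (Filter.Eventually.of_forall hGpow)
  have hHq : ∫ ξ, H ξ ^ ((m:ℝ)) = ∫ ξ, Bint ξ :=
    integral_congr_ae (Filter.Eventually.of_forall hHpow)
  rw [hGp, hHq] at hHolder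
  have hΦeq : ∫ ξ, Φ ξ = ((m:ℝ) * |β+1|⁻¹) * ∫ ξ, G ξ * H ξ := by
    rw [← integral_const_mul]
    exact integral_congr_ae (Filter.Eventually.of_forall hGH)
  have hc_nonneg : (0:ℝ) ≤ (m:ℝ) * |β+1|⁻¹ := by positivity
  have key : ∫ ξ, Aint ξ ≤ ((m:ℝ) * |β+1|⁻¹) *
      ((∫ ξ, Aint ξ) ^ (1/p) * (∫ ξ, Bint ξ) ^ (1/(m:ℝ))) := by
    calc ∫ ξ, Aint ξ ≤ ∫ ξ, Φ ξ := hA2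
      _ = ((m:ℝ) * |β+1|⁻¹) * ∫ ξ, G ξ * H ξ := hΦeq
      _ ≤ ((m:ℝ) * |β+1|⁻¹) *
          ((∫ ξ, Aint ξ) ^ (1/p) * (∫ ξ, Bint ξ) ^ (1/(m:ℝ))) :=
        mul_le_mul_of_nonneg_left hHolder hc_nonneg
  -- convert the goal
  have hset1 : ∫ ξ in {ξ : EuclideanSpace ℝ (Fin N) | sfun hmN ξ < R},
      |u ξ| ^ (m:ℝ) * sfun hmN ξ ^ (-(m:ℝ)) * Real.log (R / sfun hmN ξ) ^ β
      = ∫ ξ, Aint ξ := by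
    rw [setIntegral_eq_integral_of_forall_compl_eq_zero (fun ξ hξ => ?_)]
    · exact integral_congr_ae (Filter.Eventually.of_forall fun ξ => by
        rw [hAint_def]
        simp only [hφ_def]
        rw [Real.rpow_natCast])
    · have hξK : ξ ∉ tsupport u := fun h => hξ (hK_s_ltR ξ h)
      rw [image_eq_zero_of_notMem_tsupport hξK]
      simp [Real.zero_rpow hm0]
  have hset2 : ∫ ξ in {ξ : EuclideanSpace ℝ (Fin N) | sfun hmN ξ < R},
      ‖gradient u ξ‖ ^ (m:ℝ) * Real.log (R / sfun hmN ξ) ^ ((m:ℝ)+β)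
      = ∫ ξ, Bint ξ := by
    rw [setIntegral_eq_integral_of_forall_compl_eq_zero (fun ξ hξ => ?_)]
    · exact integral_congr_ae (Filter.Eventually.of_forall fun ξ => by
        rw [hBint_def]
        simp only
        rw [Real.rpow_natCast])
    · have hξK : ξ ∉ tsupport u := fun h => hξ (hK_s_ltR ξ h)
      rw [gradient_zero_off hξK]
      simp [Real.zero_rpow hm0]
  rw [hset1, hset2]
  have hA_nonneg : 0 ≤ ∫ ξ, Aint ξ := integral_nonneg hAnn
  have hB_nonneg : 0 ≤ ∫ ξ, Bint ξ := integral_nonneg hBnn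
  rcases hA_nonneg.eq_or_lt with hA0 | hApos
  · rw [← hA0, mul_zero]
    exact hB_nonneg
  · have h1p : 1/p = ((m:ℝ)-1)/(m:ℝ) := by rw [hp_def, one_div, inv_div]
    rw [h1p] at key
    have hsplit : ∫ ξ, Aint ξ
        = (∫ ξ, Aint ξ) ^ (((m:ℝ)-1)/(m:ℝ)) * (∫ ξ, Aint ξ) ^ ((1:ℝ)/(m:ℝ)) := by
      rw [← Real.rpow_add hApos]
      rw [show ((m:ℝ)-1)/(m:ℝ) + 1/(m:ℝ) = 1 by field_simp; ring]
      rw [Real.rpow_one]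
    have hstep : (∫ ξ, Aint ξ) ^ ((1:ℝ)/(m:ℝ))
        ≤ ((m:ℝ) * |β+1|⁻¹) * (∫ ξ, Bint ξ) ^ ((1:ℝ)/(m:ℝ)) := by
      have h2 : (∫ ξ, Aint ξ) ^ (((m:ℝ)-1)/(m:ℝ)) * (∫ ξ, Aint ξ) ^ ((1:ℝ)/(m:ℝ))
          ≤ (∫ ξ, Aint ξ) ^ (((m:ℝ)-1)/(m:ℝ))
            * (((m:ℝ) * |β+1|⁻¹) * (∫ ξ, Bint ξ) ^ ((1:ℝ)/(m:ℝ))) := by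
        calc (∫ ξ, Aint ξ) ^ (((m:ℝ)-1)/(m:ℝ)) * (∫ ξ, Aint ξ) ^ ((1:ℝ)/(m:ℝ))
            = ∫ ξ, Aint ξ := hsplit.symm
          _ ≤ ((m:ℝ) * |β+1|⁻¹) *
              ((∫ ξ, Aint ξ) ^ (((m:ℝ)-1)/(m:ℝ)) * (∫ ξ, Bint ξ) ^ ((1:ℝ)/(m:ℝ))) := by
              have : (1:ℝ)/(m:ℝ) = 1/(m:ℝ) := rfl
              exact key
          _ = (∫ ξ, Aint ξ) ^ (((m:ℝ)-1)/(m:ℝ))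
              * (((m:ℝ) * |β+1|⁻¹) * (∫ ξ, Bint ξ) ^ ((1:ℝ)/(m:ℝ))) := by ring
      exact le_of_mul_le_mul_left h2 (Real.rpow_pos_of_pos hApos _)
    have hfin : ∫ ξ, Aint ξ ≤ ((m:ℝ) * |β+1|⁻¹) ^ (m:ℝ) * ∫ ξ, Bint ξ := by
      have h3 := Real.rpow_le_rpow (Real.rpow_nonneg hA_nonneg _) hstep hmpos.le
      rw [← Real.rpow_mul hA_nonneg, show (1:ℝ)/(m:ℝ) * (m:ℝ) = 1 by field_simp,
        Real.rpow_one] at h3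
      rw [Real.mul_rpow hc_nonneg (Real.rpow_nonneg hB_nonneg _),
        ← Real.rpow_mul hB_nonneg, show (1:ℝ)/(m:ℝ) * (m:ℝ) = 1 by field_simp,
        Real.rpow_one] at h3
      exact h3
    have hconst : (|β+1|/(m:ℝ)) ^ (m:ℝ) * ((m:ℝ) * |β+1|⁻¹) ^ (m:ℝ) = 1 := by
      rw [← Real.mul_rpow (div_nonneg habs.le hmpos.le) hc_nonneg]
      rw [show |β+1|/(m:ℝ) * ((m:ℝ) * |β+1|⁻¹) = 1 by field_simp]
      exact Real.one_rpow _
    calc (|β+1|/(m:ℝ)) ^ (m:ℝ) * ∫ ξ, Aint ξ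
        ≤ (|β+1|/(m:ℝ)) ^ (m:ℝ) * (((m:ℝ) * |β+1|⁻¹) ^ (m:ℝ) * ∫ ξ, Bint ξ) :=
          mul_le_mul_of_nonneg_left hfin (Real.rpow_nonneg (div_nonneg habs.le hmpos.le) _)
      _ = ((|β+1|/(m:ℝ)) ^ (m:ℝ) * ((m:ℝ) * |β+1|⁻¹) ^ (m:ℝ)) * ∫ ξ, Bint ξ := by ring
      _ = ∫ ξ, Bint ξ := by rw [hconst, one_mul]
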